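/- Let Z ⊆ S̃ be a subfamily of the augmented system of a G-symmetric P-polygonal system with attractor K, such that Z is a zipper with vertices A = z_0, ..., z_k = B where A, B are vertices of P. Then the attractor K_Z of Z is a subcontinuum of K, and hence a subdendrite of K. -/

import Mathlib

open Complex Real

/-- If a bounded set `A` is covered by the images `T i '' A` of itself under a family of
uniform contractions, and `B` is a closed nonempty set invariant under every `T i`,
then `A ⊆ B`. -/
private lemma absorb_aux {α : Type*} [MetricSpace α] {ι : Type*}
    {T : ι → α → α} {ρ : ℝ} (hρ0 : 0 ≤ ρ) (hρ1 : ρ < 1)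
    (hT : ∀ i x y, dist (T i x) (T i y) ≤ ρ * dist x y)
    {A B : Set α} (hA : A ⊆ ⋃ i, T i '' A) (hAb : Bornology.IsBounded A)
    (hB : IsClosed B) (hBne : B.Nonempty) (hTB : ∀ i, ∀ x ∈ B, T i x ∈ B) :
    A ⊆ B := by
  obtain ⟨y₀, hy₀⟩ := hBne
  obtain ⟨C, hC⟩ : ∃ C, ∀ a ∈ A, dist a y₀ ≤ C := by
    rcases (Metric.isBounded_iff_subset_closedBall y₀).1 hAb with ⟨C, h⟩
    exact ⟨C, fun a ha => h ha⟩
  have key : ∀ n : ℕ, ∀ a ∈ A, ∃ w ∈ B, dist a w ≤ ρ ^ n * C := by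
    intro n
    induction n with
    | zero => intro a ha; exact ⟨y₀, hy₀, by simpa using hC a ha⟩
    | succ n ih =>
      intro a ha
      rcases Set.mem_iUnion.1 (hA ha) with ⟨i, b, hb, hba⟩
      rcases ih b hb with ⟨w, hw, hdw⟩
      refine ⟨T i w, hTB i w hw, ?_⟩
      calc dist a (T i w) = dist (T i b) (T i w) := by rw [hba]
        _ ≤ ρ * dist b w := hT i b w
        _ ≤ ρ * (ρ ^ n * C) := mul_le_mul_of_nonneg_left hdw hρ0
        _ = ρ ^ (n + 1) * C := by ring
  intro a ha
  rw [← hB.closure_eq, Metric.mem_closure_iff]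
  intro δ hδ
  have h0 : Filter.Tendsto (fun n : ℕ => ρ ^ n * C) Filter.atTop (nhds 0) := by
    simpa using (tendsto_pow_atTop_nhds_zero_of_lt_one hρ0 hρ1).mul_const C
  obtain ⟨N, hN⟩ := (h0.eventually (gt_mem_nhds hδ)).exists
  obtain ⟨w, hw, hdw⟩ := key N a ha
  exact ⟨w, hw, lt_of_le_of_lt hdw hN⟩

/-- If `Z ⊆ S̃` is a subfamily of the augmented system of a
`G`-symmetric `P`-polygonal system (`P` a regular `n`-gon, `G` its rotation group,
generated by the rotation `f` by `2π/n` about the center `O`) with attractor `K`,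
and `Z` is a zipper whose first and last vertices `z_0`, `z_k` are vertices of `P`,
then the attractor `K_Z` of `Z` is a subcontinuum (hence a subdendrite) of `K`. -/
theorem stmt18 (n : ℕ) (hn : 3 ≤ n) (O c : ℂ) (hc : c ≠ 0)
    (v : Fin n → ℂ) (hv : ∀ k : Fin n, v k = O + c * Complex.exp (2 * π * Complex.I * k / n))
    (P : Set ℂ) (hP : P = convexHull ℝ (Set.range v))
    (f : ℂ → ℂ) (hf : ∀ z : ℂ, f z = O + Complex.exp (2 * π * Complex.I / n) * (z - O))
    -- the system of contracting similarities
    {m : ℕ} (S : Fin m → ℂ → ℂ) (r : Fin m → ℝ)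
    (hr : ∀ i, r i < 1) (hr0 : ∀ i, 0 < r i)
    (hS : ∀ i, ∀ x y : ℂ, dist (S i x) (S i y) = r i * dist x y)
    (hD1 : ∀ i, S i '' P ⊆ P)
    (hD2 : ∀ i j : Fin m, i ≠ j → S i '' P ∩ S j '' P = ∅ ∨
      ∃ p : ℂ, S i '' P ∩ S j '' P = {p} ∧
        p ∈ S i '' Set.range v ∧ p ∈ S j '' Set.range v)
    (hD3 : ∀ k : Fin n, ∃ i : Fin m, ∃ l : Fin n, S i (v l) = v k)
    (hD4 : ContractibleSpace ↥(⋃ i, S i '' P))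
    -- G-symmetry with respect to the rotation group generated by f
    (hsym : ∀ (k : ℕ) (i : Fin m), ∃ (k' : ℕ) (j : Fin m),
      f^[k] ∘ S i = S j ∘ f^[k'])
    -- the attractor K of S (and of the augmented system S̃)
    (K : Set ℂ) (hKne : K.Nonempty) (hKc : IsCompact K)
    (hK : K = ⋃ i, S i '' K)
    -- the zipper Z, a subfamily of the augmented system S̃
    {k : ℕ} (hk : 1 ≤ k) (Z : Fin k → ℂ → ℂ)
    (hZaug : ∀ i : Fin k, ∃ (i' : Fin m) (l : ℕ), Z i = S i' ∘ f^[l])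
    (z : ℕ → ℂ) (ε : Fin k → ℕ) (hε : ∀ i, ε i ≤ 1)
    (hz0 : ∀ i : Fin k, Z i (z 0) = z (i.1 + ε i))
    (hzm : ∀ i : Fin k, Z i (z k) = z (i.1 + 1 - ε i))
    (hA : ∃ a : Fin n, z 0 = v a) (hB : ∃ b : Fin n, z k = v b)
    -- the attractor K_Z of Z
    (KZ : Set ℂ) (hKZne : KZ.Nonempty) (hKZc : IsCompact KZ)
    (hKZ : KZ = ⋃ i, Z i '' KZ) :
    KZ ⊆ K ∧ IsCompact KZ ∧ IsConnected KZ := by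
  -- `m ≠ 0`
  have hm : 0 < m := by
    rcases Nat.eq_zero_or_pos m with h | h
    · subst h
      simp only [Set.iUnion_of_empty] at hK
      exact absurd hK (by rcases hKne with ⟨x, hx⟩; intro h; rw [h] at hx; exact hx)
    · exact h
  haveI : Nonempty (Fin m) := ⟨⟨0, hm⟩⟩
  -- uniform contraction ratio
  set ρ : ℝ := Finset.univ.sup' Finset.univ_nonempty r with hρdef
  have hrρ : ∀ i, r i ≤ ρ := fun i => Finset.le_sup' r (Finset.mem_univ i)
  have hρ1 : ρ < 1 := (Finset.sup'_lt_iff Finset.univ_nonempty).2 fun i _ => hr i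
  have hρ0 : 0 ≤ ρ := le_trans (hr0 ⟨0, hm⟩).le (hrρ ⟨0, hm⟩)
  -- `f` is an isometry fixing `O`
  have habse : ‖(Complex.exp (2 * (π:ℂ) * Complex.I / (n:ℂ)))‖ = 1 := by
    rw [Complex.norm_exp]; simp [Complex.div_re]
  have hfiso : ∀ x y : ℂ, dist (f x) (f y) = dist x y := by
    intro x y
    rw [hf x, hf y, Complex.dist_eq, Complex.dist_eq]
    have h1 : O + Complex.exp (2 * π * Complex.I / n) * (x - O)
        - (O + Complex.exp (2 * π * Complex.I / n) * (y - O))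
        = Complex.exp (2 * π * Complex.I / n) * (x - y) := by ring
    rw [h1, norm_mul, habse, one_mul]
  have hfliso : ∀ (l : ℕ) (x y : ℂ), dist (f^[l] x) (f^[l] y) = dist x y := by
    intro l
    induction l with
    | zero => simp
    | succ l ih =>
      intro x y
      rw [Function.iterate_succ_apply', Function.iterate_succ_apply', hfiso, ih]
  have hfO : f O = O := by rw [hf]; ring
  have hflO : ∀ l : ℕ, f^[l] O = O := by
    intro l
    induction l with
    | zero => simp
    | succ l ih => rw [Function.iterate_succ_apply', ih, hfO]
  -- contraction estimates for the systems
  have hSlip : ∀ (i : Fin m) (x y : ℂ), dist (S i x) (S i y) ≤ ρ * dist x y := by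
    intro i x y
    rw [hS i x y]
    exact mul_le_mul_of_nonneg_right (hrρ i) dist_nonneg
  have hZlip : ∀ (i : Fin k) (x y : ℂ), dist (Z i x) (Z i y) ≤ ρ * dist x y := by
    intro i x y
    obtain ⟨i', l, he⟩ := hZaug i
    rw [he]
    simp only [Function.comp_apply]
    rw [hS i', hfliso]
    exact mul_le_mul_of_nonneg_right (hrρ i') dist_nonneg
  -- basic invariances
  have hSK : ∀ i : Fin m, ∀ x ∈ K, S i x ∈ K := by
    intro i x hx
    rw [hK]
    exact Set.mem_iUnion.2 ⟨i, ⟨x, hx, rfl⟩⟩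
  -- `K` is invariant under all the rotations
  have hfK : ∀ (l : ℕ), ∀ x ∈ K, f^[l] x ∈ K := by
    have hsub : (⋃ l : ℕ, f^[l] '' K) ⊆ K := by
      apply absorb_aux hρ0 hρ1 hSlip
      · -- the union is covered by its images under the `S i`
        intro x hx
        rcases Set.mem_iUnion.1 hx with ⟨l, y, hy, hyx⟩
        rw [hK] at hy
        rcases Set.mem_iUnion.1 hy with ⟨i, w, hw, hwy⟩
        obtain ⟨k', j, hcomm⟩ := hsym l i
        refine Set.mem_iUnion.2 ⟨j, f^[k'] w, ?_, ?_⟩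
        · exact Set.mem_iUnion.2 ⟨k', w, hw, rfl⟩
        · have : f^[l] (S i w) = S j (f^[k'] w) := congrFun hcomm w
          rw [← this, hwy, hyx]
      · -- boundedness
        obtain ⟨R, hR⟩ := (Metric.isBounded_iff_subset_closedBall O).1 hKc.isBounded
        apply (Metric.isBounded_iff_subset_closedBall O).2
        refine ⟨R, ?_⟩
        intro x hx
        rcases Set.mem_iUnion.1 hx with ⟨l, y, hy, hyx⟩
        have : dist x O = dist y O := by
          rw [← hyx]
          conv_lhs => rw [← hflO l]
          exact hfliso l y O
        simpa [Metric.mem_closedBall, this] using hR hy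
      · exact hKc.isClosed
      · exact hKne
      · exact hSK
    intro l x hx
    exact hsub (Set.mem_iUnion.2 ⟨l, x, hx, rfl⟩)
  have hZK : ∀ i : Fin k, ∀ x ∈ K, Z i x ∈ K := by
    intro i x hx
    obtain ⟨i', l, he⟩ := hZaug i
    rw [he]
    exact hSK i' _ (hfK l x hx)
  have hZKZ : ∀ i : Fin k, ∀ x ∈ KZ, Z i x ∈ KZ := by
    intro i x hx
    rw [hKZ]
    exact Set.mem_iUnion.2 ⟨i, ⟨x, hx, rfl⟩⟩
  -- `KZ ⊆ K`
  have hKZK : KZ ⊆ K :=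
    absorb_aux hρ0 hρ1 hZlip (le_of_eq hKZ) hKZc.isBounded hKc.isClosed hKne hZK
  refine ⟨hKZK, hKZc, ?_⟩
  -- the endpoints of the zipper are in `KZ`
  have hi₀ : (0 : ℕ) < k := hk
  have hεcases : ∀ i : Fin k, ε i = 0 ∨ ε i = 1 := fun i => Nat.le_one_iff_eq_zero_or_eq_one.1 (hε i)
  have hends : z 0 ∈ KZ ∧ z k ∈ KZ := by
    have hsub : ({z 0, z k} : Set ℂ) ⊆ KZ := by
      apply absorb_aux hρ0 hρ1 hZlip
      · intro x hx
        rcases hx with hx | hx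
        · -- x = z 0
          subst hx
          refine Set.mem_iUnion.2 ⟨⟨0, hi₀⟩, ?_⟩
          rcases hεcases ⟨0, hi₀⟩ with h | h
          · exact ⟨z 0, Set.mem_insert _ _, by rw [hz0 ⟨0, hi₀⟩, h]⟩
          · refine ⟨z k, Set.mem_insert_of_mem _ rfl, ?_⟩
            rw [hzm ⟨0, hi₀⟩, h]
            show z (0 + 1 - 1) = z 0
            congr 1
        · -- x = z k
          rw [Set.mem_singleton_iff] at hx
          subst hx
          have hk1 : k - 1 < k := by omega
          refine Set.mem_iUnion.2 ⟨⟨k - 1, hk1⟩, ?_⟩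
          rcases hεcases ⟨k - 1, hk1⟩ with h | h
          · refine ⟨z k, Set.mem_insert_of_mem _ rfl, ?_⟩
            rw [hzm ⟨k - 1, hk1⟩, h]
            show z (k - 1 + 1 - 0) = z k
            congr 1
            omega
          · refine ⟨z 0, Set.mem_insert _ _, ?_⟩
            rw [hz0 ⟨k - 1, hk1⟩, h]
            show z (k - 1 + 1) = z k
            congr 1
            omega
      · exact (Set.toFinite _).isBounded
      · exact hKZc.isClosed
      · exact hKZne
      · exact hZKZ
    exact ⟨hsub (Set.mem_insert _ _), hsub (Set.mem_insert_of_mem _ rfl)⟩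
  obtain ⟨hz0KZ, hzkKZ⟩ := hends
  -- junction points
  have hjun : ∀ i : Fin k, (∃ s ∈ KZ, Z i s = z i.1) ∧ (∃ s ∈ KZ, Z i s = z (i.1 + 1)) := by
    intro i
    rcases hεcases i with h | h
    · constructor
      · exact ⟨z 0, hz0KZ, by have hh := hz0 i; rw [h, Nat.add_zero] at hh; exact hh⟩
      · exact ⟨z k, hzkKZ, by have hh := hzm i; rw [h, Nat.sub_zero] at hh; exact hh⟩
    · constructor
      · exact ⟨z k, hzkKZ, by have hh := hzm i; rw [h, Nat.add_sub_cancel] at hh; exact hh⟩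
      · exact ⟨z 0, hz0KZ, by have hh := hz0 i; rw [h] at hh; exact hh⟩
  -- a diameter bound for KZ
  obtain ⟨D, hD⟩ := Metric.isBounded_iff.1 hKZc.isBounded
  have hD0 : 0 ≤ D := by
    obtain ⟨x, hx⟩ := hKZne
    exact le_trans dist_nonneg (hD hx hx)
  -- the chain relation
  set Rel : ℝ → ℂ → ℂ → Prop := fun δ a b => a ∈ KZ ∧ b ∈ KZ ∧ dist a b ≤ δ with hReldef
  set Ch : ℝ → ℂ → ℂ → Prop := fun δ => Relation.ReflTransGen (Rel δ) with hChdef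
  have hRelsymm : ∀ δ, Symmetric (Rel δ) := by
    intro δ a b ⟨ha, hb, hd⟩
    exact ⟨hb, ha, by rwa [dist_comm]⟩
  have hChsymm : ∀ δ, Symmetric (Ch δ) := fun δ a b h => by
    haveI : Std.Symm (Rel δ) := ⟨fun x y hxy => hRelsymm δ hxy⟩
    exact symm_of (Relation.ReflTransGen (Rel δ)) h
  -- chains of arbitrarily small mesh
  have hchain : ∀ N : ℕ, ∀ x ∈ KZ, ∀ y ∈ KZ, Ch (ρ ^ N * D) x y := by
    intro N
    induction N with
    | zero =>
      intro x hx y hy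
      exact Relation.ReflTransGen.single ⟨hx, hy, by simpa using hD hx hy⟩
    | succ N ih =>
      intro x hx y hy
      -- within-piece chains
      have piece : ∀ (i : Fin k), ∀ p ∈ KZ, ∀ q ∈ KZ,
          Ch (ρ ^ (N + 1) * D) (Z i p) (Z i q) := by
        intro i p hp q hq
        refine Relation.ReflTransGen.lift (Z i) ?_ _ _ (ih p hp q hq)
        rintro a b ⟨ha, hb, hd⟩
        refine ⟨hZKZ i a ha, hZKZ i b hb, ?_⟩
        calc dist (Z i a) (Z i b) ≤ ρ * dist a b := hZlip i a b
          _ ≤ ρ * (ρ ^ N * D) := mul_le_mul_of_nonneg_left hd hρ0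
          _ = ρ ^ (N + 1) * D := by ring
      -- consecutive junctions are chained
      have hjc : ∀ i : Fin k, Ch (ρ ^ (N + 1) * D) (z i.1) (z (i.1 + 1)) := by
        intro i
        obtain ⟨⟨s, hs, hes⟩, ⟨t, ht, het⟩⟩ := hjun i
        rw [← hes, ← het]
        exact piece i s hs t ht
      -- chain from z 0 to z j for j ≤ k
      have hz0j : ∀ j : ℕ, j ≤ k → Ch (ρ ^ (N + 1) * D) (z 0) (z j) := by
        intro j
        induction j with
        | zero => intro _; exact Relation.ReflTransGen.refl
        | succ j ihj =>
          intro hjk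
          have hjlt : j < k := lt_of_lt_of_le (Nat.lt_succ_self j) hjk
          exact (ihj (le_of_lt hjlt)).trans (hjc ⟨j, hjlt⟩)
      -- decompose x and y into pieces
      have hx' := hx; have hy' := hy
      rw [hKZ] at hx' hy'
      rcases Set.mem_iUnion.1 hx' with ⟨a, x', hx'KZ, hxe⟩
      rcases Set.mem_iUnion.1 hy' with ⟨b, y', hy'KZ, hye⟩
      -- connect x to the junction z a.1, y to z b.1
      obtain ⟨⟨sa, hsa, hesa⟩, _⟩ := hjun a
      obtain ⟨⟨sb, hsb, hesb⟩, _⟩ := hjun b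
      have chx : Ch (ρ ^ (N + 1) * D) x (z a.1) := by
        rw [← hxe, ← hesa]; exact piece a x' hx'KZ sa hsa
      have chy : Ch (ρ ^ (N + 1) * D) y (z b.1) := by
        rw [← hye, ← hesb]; exact piece b y' hy'KZ sb hsb
      have cha : Ch (ρ ^ (N + 1) * D) (z 0) (z a.1) := hz0j a.1 (le_of_lt a.2)
      have chb : Ch (ρ ^ (N + 1) * D) (z 0) (z b.1) := hz0j b.1 (le_of_lt b.2)
      exact chx.trans ((hChsymm _ cha).trans (chb.trans (hChsymm _ chy)))
  -- connectedness
  refine ⟨hKZne, ?_⟩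
  rw [isPreconnected_iff_subset_of_fully_disjoint_closed hKZc.isClosed]
  intro u w hu hw hsub hdisj
  by_contra hcon
  push_neg at hcon
  obtain ⟨hnu, hnw⟩ := hcon
  obtain ⟨xx, hxxKZ, hxxu⟩ := Set.not_subset.1 hnu
  obtain ⟨yy, hyyKZ, hyyw⟩ := Set.not_subset.1 hnw
  have hxxw : xx ∈ w := (hsub hxxKZ).resolve_left hxxu
  have hyyu : yy ∈ u := (hsub hyyKZ).resolve_right hyyw
  -- the two closed pieces of KZ are at positive distance
  set A : Set ℂ := KZ ∩ u with hAdef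
  set B : Set ℂ := KZ ∩ w with hBdef
  have hAcomp : IsCompact A := hKZc.inter_right hu
  have hBcomp : IsCompact B := hKZc.inter_right hw
  have hAne : A.Nonempty := ⟨yy, hyyKZ, hyyu⟩
  have hBne : B.Nonempty := ⟨xx, hxxKZ, hxxw⟩
  obtain ⟨a₀, ha₀A, hmin⟩ := hAcomp.exists_isMinOn hAne
    ((Metric.continuous_infDist_pt B).continuousOn)
  have hδpos : 0 < Metric.infDist a₀ B := by
    rw [← (hBcomp.isClosed).notMem_iff_infDist_pos hBne]
    intro hmem
    exact (Set.disjoint_left.1 hdisj ha₀A.2 hmem.2)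
  set δ := Metric.infDist a₀ B with hδdef
  have hsep : ∀ p ∈ A, ∀ q ∈ B, δ ≤ dist p q := by
    intro p hp q hq
    exact le_trans (isMinOn_iff.1 hmin p hp) (Metric.infDist_le_dist_of_mem hq)
  -- choose a fine enough chain
  have h0 : Filter.Tendsto (fun N : ℕ => ρ ^ N * D) Filter.atTop (nhds 0) := by
    simpa using (tendsto_pow_atTop_nhds_zero_of_lt_one hρ0 hρ1).mul_const D
  obtain ⟨N, hN⟩ := (h0.eventually (gt_mem_nhds hδpos)).exists
  have hch := hchain N yy hyyKZ xx hxxKZ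
  -- along a chain of mesh < δ starting in A we stay in A
  have hstay : ∀ q : ℂ, Relation.ReflTransGen (Rel (ρ ^ N * D)) yy q → q ∈ A := by
    intro q hq
    induction hq with
    | refl => exact ⟨hyyKZ, hyyu⟩
    | tail h1 h2 ih =>
      obtain ⟨hbKZ, hcKZ, hd⟩ := h2
      rcases hsub hcKZ with hcu | hcw
      · exact ⟨hcKZ, hcu⟩
      · exfalso
        have := hsep _ ih _ ⟨hcKZ, hcw⟩
        have : δ ≤ ρ ^ N * D := le_trans this hd
        linarith
  exact hxxu (hstay xx hch).2
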